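/- Let the data matrices X_0, X, U be generated by the system and satisfy the persistency of excitation assumption rank([X_0; U]) = mT + n, with T ≥ 1. Fix λ ∈ ℝ and define P_λ = X_0 K_U [I 0] Ker([X K_U − W Λ_λ X_0 K_U, X K_0]), i.e., P_λ = { X_0 K_U α : there exists β with X K_U α + X K_0 β = W Λ_λ X_0 K_U α }. Then P_λ = { v ∈ ℝ^n : (λ I − A)v ∈ Im(B) }; i.e., the data-driven subspace P_λ coincides with the model-based allowable eigenvector subspace associated with λ. -/
import Mathlib


open Matrix

/-- The full state sequence over times `0, 1, …, T` built from the initial state `x0` and the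
subsequent states `x 0 = x(1), …, x (T-1) = x(T)`. -/
def stateSeq {n T : ℕ} (x0 : Fin n → ℝ) (x : Fin T → Fin n → ℝ) : Fin (T + 1) → Fin n → ℝ :=
  Fin.cases x0 x

/-- `(x0, u, x)` is a trajectory of the system `x(t+1) = A x(t) + B u(t)`. -/
def IsTrajectory {n m T : ℕ} (A : Matrix (Fin n) (Fin n) ℝ) (B : Matrix (Fin n) (Fin m) ℝ)
    (x0 : Fin n → ℝ) (u : Fin T → Fin m → ℝ) (x : Fin T → Fin n → ℝ) : Prop :=
  ∀ t : Fin T, x t = A.mulVec (stateSeq x0 x t.castSucc) + B.mulVec (u t)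

/-- The data matrices are generated by `N` experiments of length `T` on the system. -/
def DataGenerated {n m T N : ℕ} (A : Matrix (Fin n) (Fin n) ℝ) (B : Matrix (Fin n) (Fin m) ℝ)
    (X0 : Matrix (Fin n) (Fin N) ℝ) (X : Matrix (Fin T × Fin n) (Fin N) ℝ)
    (U : Matrix (Fin T × Fin m) (Fin N) ℝ) : Prop :=
  ∀ i : Fin N, IsTrajectory A B (fun j => X0 j i) (fun t j => U (t, j) i) (fun t j => X (t, j) i)

/-- The columns of `Kb` form a basis of `Ker M`. -/
def IsKerBasis {α β γ : Type*} [Fintype β] [Fintype γ]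
    (M : Matrix α β ℝ) (Kb : Matrix β γ ℝ) : Prop :=
  Function.Injective Kb.mulVecLin ∧ LinearMap.range Kb.mulVecLin = LinearMap.ker M.mulVecLin

/-- `Λ_λ = [I; λI; λ²I; …; λ^T I] ∈ ℝ^{n(T+1) × n}`. -/
def LamMat (T n : ℕ) (lam : ℝ) : Matrix (Fin (T + 1) × Fin n) (Fin n) ℝ :=
  Matrix.of fun p q => lam ^ (p.1 : ℕ) * (if p.2 = q then 1 else 0)

/-- `W = [0_{nT×n}  I_{nT}]`, the matrix extracting the last `nT` rows of `Λ_λ`. -/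
def Wmat (T n : ℕ) : Matrix (Fin T × Fin n) (Fin (T + 1) × Fin n) ℝ :=
  Matrix.of fun p q => if q.1 = p.1.succ ∧ q.2 = p.2 then 1 else 0

/-- The state trajectory of `x(t+1) = A x(t) + B u(t)` from initial state `x0` with input `u`. -/
def trajFrom {n m : ℕ} (A : Matrix (Fin n) (Fin n) ℝ) (B : Matrix (Fin n) (Fin m) ℝ)
    (x0 : Fin n → ℝ) (u : ℕ → Fin m → ℝ) : ℕ → Fin n → ℝ
  | 0 => x0
  | t + 1 => A.mulVec (trajFrom A B x0 u t) + B.mulVec (u t)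

/-- `stateSeq` of a linear combination of experiments is the combination of the `stateSeq`s. -/
lemma stateSeq_comb {n T N : ℕ} (X0 : Matrix (Fin n) (Fin N) ℝ)
    (X : Matrix (Fin T × Fin n) (Fin N) ℝ) (g : Fin N → ℝ) (s : Fin (T + 1)) :
    stateSeq (X0.mulVec g) (fun t j => X.mulVec g (t, j)) s =
      fun j => ∑ i, stateSeq (fun j => X0 j i) (fun t j => X (t, j) i) s j * g i := by
  induction s using Fin.cases with
  | zero => funext j; simp [stateSeq, mulVec, dotProduct]
  | succ t => funext j; simp [stateSeq, mulVec, dotProduct]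

/-- Any linear combination of the experimental data is itself a trajectory. -/
lemma traj_comb {n m T N : ℕ} {A : Matrix (Fin n) (Fin n) ℝ} {B : Matrix (Fin n) (Fin m) ℝ}
    {X0 : Matrix (Fin n) (Fin N) ℝ} {X : Matrix (Fin T × Fin n) (Fin N) ℝ}
    {U : Matrix (Fin T × Fin m) (Fin N) ℝ}
    (hdata : DataGenerated A B X0 X U) (g : Fin N → ℝ) :
    IsTrajectory A B (X0.mulVec g) (fun t j => U.mulVec g (t, j)) (fun t j => X.mulVec g (t, j)) := by
  intro t
  funext j
  have h : ∀ i, X (t, j) i =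
      A.mulVec (stateSeq (fun j => X0 j i) (fun t j => X (t, j) i) t.castSucc) j
        + B.mulVec (fun k => U (t, k) i) j := by
    intro i
    have := congrFun (hdata i t) j
    simpa using this
  show X.mulVec g (t, j) = _
  simp only [Pi.add_apply, stateSeq_comb]
  simp only [mulVec, dotProduct] at h ⊢
  rw [show (∑ i, X (t, j) i * g i) = ∑ i, ((∑ k, A j k * stateSeq (fun j => X0 j i) (fun t j => X (t, j) i) t.castSucc k) + ∑ k, B j k * U (t, k) i) * g i from Finset.sum_congr rfl fun i _ => by rw [h i]]
  simp only [add_mul, Finset.sum_add_distrib, Finset.sum_mul, Finset.mul_sum]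
  rw [Finset.sum_comm (γ := Fin N), Finset.sum_comm (γ := Fin N)]
  ring_nf

/-- Entries of `(W Λ_λ) v`. -/
lemma WLam_mulVec {T n : ℕ} (lam : ℝ) (v : Fin n → ℝ) (t : Fin T) (j : Fin n) :
    (Wmat T n * LamMat T n lam).mulVec v (t, j) = lam ^ ((t : ℕ) + 1) * v j := by
  simp only [mulVec, dotProduct, Matrix.mul_apply, Wmat, LamMat, Matrix.of_apply]
  have key : ∀ q : Fin n, (∑ p : Fin (T+1) × Fin n, (if p.1 = t.succ ∧ p.2 = j then (1:ℝ) else 0) * (lam ^ (p.1 : ℕ) * if p.2 = q then 1 else 0)) = lam ^ ((t:ℕ)+1) * (if j = q then 1 else 0) := by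
    intro q
    rw [Fintype.sum_prod_type]
    rw [Finset.sum_eq_single t.succ, Finset.sum_eq_single j] <;> simp +contextual [Fin.val_succ]
  rw [Finset.sum_congr rfl fun x _ => by rw [key x]]
  simp [mul_assoc, mul_ite]

/-- Persistency of excitation yields surjectivity of `[X0; U]`. -/
lemma surj_of_rank {n m T N : ℕ} (X0 : Matrix (Fin n) (Fin N) ℝ)
    (U : Matrix (Fin T × Fin m) (Fin N) ℝ)
    (hPE : (Matrix.fromRows X0 U).rank = m * T + n) :
    Function.Surjective (Matrix.fromRows X0 U).mulVecLin := by
  rw [← LinearMap.range_eq_top]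
  apply Submodule.eq_top_of_finrank_eq
  have h1 : Module.finrank ℝ (LinearMap.range (Matrix.fromRows X0 U).mulVecLin)
      = (Matrix.fromRows X0 U).rank := rfl
  rw [h1, hPE, Module.finrank_pi]
  simp [Fintype.card_sum, Fintype.card_prod]
  ring

/-- Under persistency of excitation and `T ≥ 1`, the data-driven allowable
eigenvector subspace
`P_λ = { X₀ K_U α : ∃ β, X K_U α + X K₀ β = W Λ_λ X₀ K_U α }`
coincides with the model-based allowable eigenvector subspace
`{ v ∈ ℝⁿ : (λ I − A) v ∈ Im(B) }`. -/
theorem stmt6 {n m T N p q : ℕ}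
    (A : Matrix (Fin n) (Fin n) ℝ) (B : Matrix (Fin n) (Fin m) ℝ)
    (X0 : Matrix (Fin n) (Fin N) ℝ) (X : Matrix (Fin T × Fin n) (Fin N) ℝ)
    (U : Matrix (Fin T × Fin m) (Fin N) ℝ)
    (hdata : DataGenerated A B X0 X U)
    (KU : Matrix (Fin N) (Fin p) ℝ) (K0 : Matrix (Fin N) (Fin q) ℝ)
    (hKU : IsKerBasis U KU) (hK0 : IsKerBasis X0 K0)
    (hPE : (Matrix.fromRows X0 U).rank = m * T + n)
    (hT : 1 ≤ T) (lam : ℝ) :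
    {v : Fin n → ℝ | ∃ (α : Fin p → ℝ) (β : Fin q → ℝ),
        X0.mulVec (KU.mulVec α) = v ∧
        X.mulVec (KU.mulVec α) + X.mulVec (K0.mulVec β) =
          (Wmat T n * LamMat T n lam).mulVec (X0.mulVec (KU.mulVec α))} =
      {v : Fin n → ℝ | ∃ w : Fin m → ℝ,
        (lam • (1 : Matrix (Fin n) (Fin n) ℝ) - A).mulVec v = B.mulVec w} := by
  obtain ⟨-, hKUr⟩ := hKU
  obtain ⟨-, hK0r⟩ := hK0
  have hKUker : ∀ α, U.mulVec (KU.mulVec α) = 0 := by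
    intro α
    have h : KU.mulVecLin α ∈ LinearMap.ker U.mulVecLin := by
      rw [← hKUr]; exact LinearMap.mem_range_self _ α
    simpa [Matrix.mulVecLin_apply] using h
  have hK0ker : ∀ β, X0.mulVec (K0.mulVec β) = 0 := by
    intro β
    have h : K0.mulVecLin β ∈ LinearMap.ker X0.mulVecLin := by
      rw [← hK0r]; exact LinearMap.mem_range_self _ β
    simpa [Matrix.mulVecLin_apply] using h
  ext v
  simp only [Set.mem_setOf_eq]
  constructor
  · rintro ⟨α, β, hv, hcon⟩
    set g := KU.mulVec α + K0.mulVec β with hg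
    have hX0g : X0.mulVec g = v := by
      rw [hg, mulVec_add, hK0ker, add_zero, hv]
    refine ⟨fun k => U.mulVec g (⟨0, hT⟩, k), ?_⟩
    funext j
    have ht := congrFun (traj_comb hdata g ⟨0, hT⟩) j
    have hcs : ((⟨0, hT⟩ : Fin T).castSucc) = (0 : Fin (T + 1)) := by
      ext; simp
    rw [hcs] at ht
    have hss : stateSeq (X0.mulVec g) (fun t j => X.mulVec g (t, j)) (0 : Fin (T + 1)) =
        X0.mulVec g := by
      funext j'; simp [stateSeq]
    rw [hss, hX0g] at ht
    have hXg : X.mulVec g (⟨0, hT⟩, j) = lam * v j := by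
      rw [hg, mulVec_add]
      have h2 := congrFun hcon ((⟨0, hT⟩ : Fin T), j)
      rw [hv] at h2
      rw [WLam_mulVec] at h2
      rw [show lam * v j = lam ^ (((⟨0, hT⟩ : Fin T) : ℕ) + 1) * v j by norm_num]
      exact h2
    simp only [Pi.add_apply] at ht
    rw [hXg] at ht
    simp only [sub_mulVec, smul_mulVec, one_mulVec, Pi.sub_apply, Pi.smul_apply,
      smul_eq_mul]
    linarith [ht]
  · rintro ⟨w, hw⟩
    have hwpt : ∀ j, A.mulVec v j + B.mulVec w j = lam * v j := by
      intro j
      have h := congrFun hw j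
      simp only [sub_mulVec, smul_mulVec, one_mulVec, Pi.sub_apply, Pi.smul_apply,
        smul_eq_mul] at h
      linarith
    have hsurj := surj_of_rank X0 U hPE
    obtain ⟨g1, hg1⟩ := hsurj (Sum.elim v 0)
    obtain ⟨g2, hg2⟩ := hsurj (Sum.elim 0 (fun tk => lam ^ ((tk.1 : ℕ)) * w tk.2))
    rw [Matrix.mulVecLin_apply, Matrix.fromRows_mulVec] at hg1 hg2
    have h10 : X0.mulVec g1 = v := by
      funext j; simpa using congrFun hg1 (Sum.inl j)
    have h1U : U.mulVec g1 = 0 := by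
      funext tk; simpa using congrFun hg1 (Sum.inr tk)
    have h20 : X0.mulVec g2 = 0 := by
      funext j; simpa using congrFun hg2 (Sum.inl j)
    have h2U : ∀ tk : Fin T × Fin m, U.mulVec g2 tk = lam ^ ((tk.1 : ℕ)) * w tk.2 := by
      intro tk; simpa using congrFun hg2 (Sum.inr tk)
    obtain ⟨α, hα⟩ : ∃ α, KU.mulVec α = g1 := by
      have h : g1 ∈ LinearMap.range KU.mulVecLin := by
        rw [hKUr]
        simpa [LinearMap.mem_ker, Matrix.mulVecLin_apply] using h1U
      obtain ⟨α, hα⟩ := h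
      exact ⟨α, by simpa [Matrix.mulVecLin_apply] using hα⟩
    obtain ⟨β, hβ⟩ : ∃ β, K0.mulVec β = g2 := by
      have h : g2 ∈ LinearMap.range K0.mulVecLin := by
        rw [hK0r]
        simpa [LinearMap.mem_ker, Matrix.mulVecLin_apply] using h20
      obtain ⟨β, hβ⟩ := h
      exact ⟨β, by simpa [Matrix.mulVecLin_apply] using hβ⟩
    set g := g1 + g2 with hg
    have hX0g : X0.mulVec g = v := by
      rw [hg, mulVec_add, h10, h20, add_zero]
    have hUg : ∀ tk : Fin T × Fin m, U.mulVec g tk = lam ^ ((tk.1 : ℕ)) * w tk.2 := by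
      intro tk
      rw [hg, mulVec_add]
      simp [h1U, h2U tk]
    have key : ∀ k (hk : k < T) (j : Fin n),
        X.mulVec g (⟨k, hk⟩, j) = lam ^ (k + 1) * v j := by
      intro k
      induction k with
      | zero =>
        intro hk j
        have ht := congrFun (traj_comb hdata g ⟨0, hk⟩) j
        have hcs : ((⟨0, hk⟩ : Fin T).castSucc) = (0 : Fin (T + 1)) := by ext; simp
        rw [hcs] at ht
        have hss : stateSeq (X0.mulVec g) (fun t j => X.mulVec g (t, j)) (0 : Fin (T + 1)) =
            X0.mulVec g := by
          funext j'; simp [stateSeq]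
        rw [hss, hX0g] at ht
        have hu : (fun k => U.mulVec g ((⟨0, hk⟩ : Fin T), k)) = w := by
          funext k'
          simpa using hUg ((⟨0, hk⟩ : Fin T), k')
        simp only [Pi.add_apply] at ht
        rw [hu] at ht
        rw [ht, pow_one]
        linarith [hwpt j]
      | succ k ih =>
        intro hk j
        have hk' : k < T := Nat.lt_of_succ_lt hk
        have ht := congrFun (traj_comb hdata g ⟨k + 1, hk⟩) j
        have hcs : ((⟨k + 1, hk⟩ : Fin T).castSucc) = Fin.succ ⟨k, hk'⟩ := by
          ext; simp
        rw [hcs] at ht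
        have hss : stateSeq (X0.mulVec g) (fun t j => X.mulVec g (t, j)) (Fin.succ ⟨k, hk'⟩) =
            fun j => X.mulVec g ((⟨k, hk'⟩ : Fin T), j) := by
          funext j'; simp [stateSeq]
        rw [hss] at ht
        have hx : (fun j => X.mulVec g ((⟨k, hk'⟩ : Fin T), j)) = lam ^ (k + 1) • v := by
          funext j'
          simp [ih hk' j']
        have hu : (fun k' => U.mulVec g ((⟨k + 1, hk⟩ : Fin T), k')) = lam ^ (k + 1) • w := by
          funext k'
          simpa using hUg ((⟨k + 1, hk⟩ : Fin T), k')
        simp only [Pi.add_apply] at ht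
        rw [hx, hu, mulVec_smul, mulVec_smul] at ht
        simp only [Pi.smul_apply, smul_eq_mul] at ht
        rw [ht]
        have := hwpt j
        calc lam ^ (k + 1) * A.mulVec v j + lam ^ (k + 1) * B.mulVec w j
            = lam ^ (k + 1) * (A.mulVec v j + B.mulVec w j) := by ring
          _ = lam ^ (k + 1) * (lam * v j) := by rw [hwpt j]
          _ = lam ^ (k + 1 + 1) * v j := by ring
    refine ⟨α, β, by rw [hα, h10], ?_⟩
    funext tj
    obtain ⟨t, j⟩ := tj
    have hL : (X.mulVec (KU.mulVec α) + X.mulVec (K0.mulVec β)) (t, j) = X.mulVec g (t, j) := by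
      rw [hg, mulVec_add, hα, hβ]
    rw [hL, hα, h10, WLam_mulVec]
    have := key (t : ℕ) t.isLt j
    simpa [Fin.eta] using this
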